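/- (Inaccuracy of the j-th tick of an i.i.d. clock, Eq. (3) of the paper.) Let X₁, …, X_j be i.i.d. real-valued random variables, and let μ₁ > 0, σ₁ > 0, ε ∈ [0,1) be such that σ₁ ≤ μ₁ and P(X₁ ∈ [μ₁ − σ₁/2, μ₁ + σ₁/2]) ≥ 1 − ε. Then for every real n > 0, the ε_{j,n}-inaccuracy of the j-th tick time T_j = X₁ + ⋯ + X_j satisfies Σ_j(ε_{j,n}) ≤ 2n·√j·(σ₁/μ₁), where ε_{j,n} := 1 − (1 − ε)^j·(1 − 2·e^{−n²/2}). -/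

import Mathlib

open MeasureTheory ProbabilityTheory

/-- The `ε`-inaccuracy `Σ_j(ε)` of a random variable `S` interpreted as the time of the
`j`-th tick of a clock: the infimum of `j·σ/μ` over all `μ > 0` and `σ ≥ 0` such that
`S` lies in `[μ − σ/2, μ + σ/2]` with probability at least `1 − ε`; it is `+∞` if no
such pair exists. -/
noncomputable def inaccuracy {Ω : Type*} [MeasurableSpace Ω] (P : Measure Ω)
    (S : Ω → ℝ) (j : ℕ) (ε : ℝ) : ENNReal :=
  ⨅ (μ : ℝ) (σ : ℝ) (_ : 0 < μ) (_ : 0 ≤ σ)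
    (_ : ENNReal.ofReal (1 - ε) ≤ P {ω | S ω ∈ Set.Icc (μ - σ / 2) (μ + σ / 2)}),
    ENNReal.ofReal (j * σ / μ)

/-- Auxiliary scalar inequality (mgf bound of a centered Bernoulli). -/
lemma bern_mgf_bound (p : ℝ) (hp0 : 0 ≤ p) (hp1 : p ≤ 1) (h : ℝ) :
    (1 - p) * Real.exp (-p * h) + p * Real.exp ((1 - p) * h) ≤ Real.exp (h ^ 2 / 8) := by
  have hd : ∀ x : ℝ, 0 < 1 - p + p * Real.exp x := by
    intro x
    rcases eq_or_lt_of_le hp0 with h0 | h0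
    · simp [← h0]
    · have := Real.exp_pos x
      nlinarith
  set F : ℝ → ℝ := fun x => p * x + x ^ 2 / 8 - Real.log (1 - p + p * Real.exp x) with hF_def
  set F' : ℝ → ℝ := fun x => p + x / 4 - p * Real.exp x / (1 - p + p * Real.exp x) with hF'_def
  have hden : ∀ x : ℝ, HasDerivAt (fun x => 1 - p + p * Real.exp x) (p * Real.exp x) x := by
    intro x
    exact ((Real.hasDerivAt_exp x).const_mul p).const_add (1 - p)
  have hF : ∀ x, HasDerivAt F (F' x) x := by
    intro x
    have hlog : HasDerivAt (fun x => Real.log (1 - p + p * Real.exp x))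
        (p * Real.exp x / (1 - p + p * Real.exp x)) x := (hden x).log (hd x).ne'
    have hpoly : HasDerivAt (fun x : ℝ => p * x + x ^ 2 / 8) (p + x / 4) x := by
      have h1 : HasDerivAt (fun x : ℝ => p * x) p x := by
        simpa using (hasDerivAt_id x).const_mul p
      have h2 : HasDerivAt (fun x : ℝ => x ^ 2 / 8) (x / 4) x := by
        have := (hasDerivAt_pow 2 x).div_const 8
        exact this.congr_deriv (by norm_num; ring)
      exact h1.add h2
    exact hpoly.sub hlog
  have hF' : ∀ x, HasDerivAt F'
      (1 / 4 - p * Real.exp x * (1 - p) / (1 - p + p * Real.exp x) ^ 2) x := by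
    intro x
    have hquot : HasDerivAt (fun x => p * Real.exp x / (1 - p + p * Real.exp x))
        ((p * Real.exp x * (1 - p + p * Real.exp x) - p * Real.exp x * (p * Real.exp x)) /
          (1 - p + p * Real.exp x) ^ 2) x :=
      ((Real.hasDerivAt_exp x).const_mul p).div (hden x) (hd x).ne'
    have hpoly : HasDerivAt (fun x : ℝ => p + x / 4) (1 / 4) x := by
      simpa using ((hasDerivAt_id x).div_const 4).const_add p
    have := hpoly.sub hquot
    exact this.congr_deriv (by ring)
  have hF'nonneg : ∀ x, 0 ≤ 1 / 4 - p * Real.exp x * (1 - p) / (1 - p + p * Real.exp x) ^ 2 := by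
    intro x
    have hdx := hd x
    rw [sub_nonneg, div_le_iff₀ (by positivity)]
    nlinarith [sq_nonneg ((1 - p) - p * Real.exp x)]
  have hmono : Monotone F' := by
    refine monotone_of_deriv_nonneg (fun x => (hF' x).differentiableAt) fun x => ?_
    rw [(hF' x).deriv]
    exact hF'nonneg x
  have hF'0 : F' 0 = 0 := by
    simp [hF'_def]
  have hFnonneg : ∀ x, 0 ≤ F x := by
    have hF0 : F 0 = 0 := by simp [hF_def]
    intro x
    rcases le_total 0 x with hx | hx
    · have hmonoF : MonotoneOn F (Set.Ici (0:ℝ)) := by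
        refine monotoneOn_of_deriv_nonneg (convex_Ici 0)
          (fun y _ => (hF y).differentiableAt.continuousAt.continuousWithinAt)
          (fun y _ => (hF y).differentiableAt.differentiableWithinAt) fun y hy => ?_
        rw [(hF y).deriv]
        rw [interior_Ici] at hy
        have : F' 0 ≤ F' y := hmono (le_of_lt hy)
        linarith [hF'0 ▸ this]
      have := hmonoF (Set.self_mem_Ici) (Set.mem_Ici.mpr hx) hx
      linarith [hF0 ▸ this]
    · have hantiF : AntitoneOn F (Set.Iic (0:ℝ)) := by
        refine antitoneOn_of_deriv_nonpos (convex_Iic 0)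
          (fun y _ => (hF y).differentiableAt.continuousAt.continuousWithinAt)
          (fun y _ => (hF y).differentiableAt.differentiableWithinAt) fun y hy => ?_
        rw [(hF y).deriv]
        rw [interior_Iic] at hy
        have : F' y ≤ F' 0 := hmono (le_of_lt hy)
        linarith [hF'0 ▸ this]
      have := hantiF (Set.mem_Iic.mpr hx) (Set.self_mem_Iic) hx
      linarith [hF0 ▸ this]
  have hlog_le : Real.log (1 - p + p * Real.exp h) ≤ p * h + h ^ 2 / 8 := by
    have := hFnonneg h
    simp only [hF_def] at this
    linarith
  have hexp : 1 - p + p * Real.exp h ≤ Real.exp (p * h + h ^ 2 / 8) := by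
    calc 1 - p + p * Real.exp h = Real.exp (Real.log (1 - p + p * Real.exp h)) :=
          (Real.exp_log (hd h)).symm
      _ ≤ Real.exp (p * h + h ^ 2 / 8) := Real.exp_le_exp.mpr hlog_le
  have key : Real.exp (-p * h) * (1 - p + p * Real.exp h) ≤ Real.exp (h ^ 2 / 8) := by
    calc Real.exp (-p * h) * (1 - p + p * Real.exp h)
        ≤ Real.exp (-p * h) * Real.exp (p * h + h ^ 2 / 8) :=
          mul_le_mul_of_nonneg_left hexp (Real.exp_pos _).le
      _ = Real.exp (h ^ 2 / 8) := by rw [← Real.exp_add]; ring_nf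
  calc (1 - p) * Real.exp (-p * h) + p * Real.exp ((1 - p) * h)
      = Real.exp (-p * h) * (1 - p + p * Real.exp h) := by
        have e : Real.exp ((1 - p) * h) = Real.exp (-p * h) * Real.exp h := by
          rw [← Real.exp_add]; ring_nf
        rw [e]; ring
    _ ≤ Real.exp (h ^ 2 / 8) := key

/-- Product of integrals for independent random variables, with integrability. -/
lemma iid_integral_prod {Ω : Type*} [MeasurableSpace Ω] {P : Measure Ω}
    [IsProbabilityMeasure P] {Y : ℕ → Ω → ℝ}
    (hY : iIndepFun Y P) (hm : ∀ i, Measurable (Y i))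
    (hint : ∀ i, Integrable (Y i) P) (s : Finset ℕ) :
    Integrable (fun ω => ∏ i ∈ s, Y i ω) P ∧
      ∫ ω, ∏ i ∈ s, Y i ω ∂P = ∏ i ∈ s, ∫ ω, Y i ω ∂P := by
  classical
  induction s using Finset.induction_on with
  | empty => simp
  | @insert i s hi ih =>
    have hfun : (∏ k ∈ s, Y k) = fun ω => ∏ k ∈ s, Y k ω := by
      funext ω; simp
    have hIndep : IndepFun (Y i) (fun ω => ∏ k ∈ s, Y k ω) P := by
      have := hY.indepFun_finsetProd_of_notMem hm hi
      rw [hfun] at this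
      exact this.symm
    have hint_prod : Integrable (fun ω => Y i ω * ∏ k ∈ s, Y k ω) P := by
      have := hIndep.integrable_mul (hint i) ih.1
      exact this
    constructor
    · have : (fun ω => ∏ k ∈ insert i s, Y k ω) = fun ω => Y i ω * ∏ k ∈ s, Y k ω := by
        funext ω; rw [Finset.prod_insert hi]
      rw [this]
      exact hint_prod
    · have hmul := hIndep.integral_mul_eq_mul_integral (hint i).1 ih.1.1
      calc ∫ ω, ∏ k ∈ insert i s, Y k ω ∂P = ∫ ω, Y i ω * ∏ k ∈ s, Y k ω ∂P := by
            congr 1; funext ω; rw [Finset.prod_insert hi]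
        _ = (∫ ω, Y i ω ∂P) * ∫ ω, ∏ k ∈ s, Y k ω ∂P := hmul
        _ = ∏ k ∈ insert i s, ∫ ω, Y k ω ∂P := by rw [Finset.prod_insert hi, ih.2]

set_option maxHeartbeats 2000000

/-- **Inaccuracy of the `j`-th tick of an i.i.d. clock** (Eq. (3) of the paper).
Let `X₁, …, X_j` be i.i.d. real random variables and let `μ₁ > 0`, `σ₁ > 0`,
`ε ∈ [0,1)` be such that `σ₁ ≤ μ₁` and `P(X₁ ∈ [μ₁ − σ₁/2, μ₁ + σ₁/2]) ≥ 1 − ε`.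
Then for every real `n > 0`, the `ε_{j,n}`-inaccuracy of the `j`-th tick time
`T_j = X₁ + ⋯ + X_j` satisfies `Σ_j(ε_{j,n}) ≤ 2n·√j·(σ₁/μ₁)`, where
`ε_{j,n} := 1 − (1 − ε)^j·(1 − 2e^{−n²/2})`. -/
theorem iid_clock_inaccuracy {Ω : Type*} [MeasurableSpace Ω]
    (P : Measure Ω) [IsProbabilityMeasure P] (X : ℕ → Ω → ℝ) (j : ℕ) (hj : 1 ≤ j)
    (hmeas : ∀ k, Measurable (X k))
    (hindep : iIndepFun X P)
    (hident : ∀ k, IdentDistrib (X k) (X 0) P P)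
    (μ₁ σ₁ ε : ℝ) (hμ₁ : 0 < μ₁) (hσ₁ : 0 < σ₁) (hσμ : σ₁ ≤ μ₁)
    (hε : ε ∈ Set.Ico (0 : ℝ) 1)
    (hconf : ENNReal.ofReal (1 - ε) ≤
      P {ω | X 0 ω ∈ Set.Icc (μ₁ - σ₁ / 2) (μ₁ + σ₁ / 2)})
    (n : ℝ) (hn : 0 < n) :
    inaccuracy P (fun ω => ∑ i ∈ Finset.range j, X i ω) j
        (1 - (1 - ε) ^ j * (1 - 2 * Real.exp (-n ^ 2 / 2))) ≤
      ENNReal.ofReal (2 * n * Real.sqrt j * (σ₁ / μ₁)) := by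
  obtain ⟨hε0, hε1⟩ := hε
  have hjR : (1 : ℝ) ≤ (j : ℝ) := by exact_mod_cast hj
  have hjpos : (0 : ℝ) < (j : ℝ) := by linarith
  set a : ℝ := μ₁ - σ₁ / 2 with ha_def
  set b : ℝ := μ₁ + σ₁ / 2 with hb_def
  have hab : a < b := by simp only [ha_def, hb_def]; linarith
  have hba : b - a = σ₁ := by simp only [ha_def, hb_def]; ring
  have ha_pos : 0 < a := by simp only [ha_def]; linarith
  set I : Set ℝ := Set.Icc a b with hI_def
  have hI : MeasurableSet I := measurableSet_Icc
  set A : ℕ → Set Ω := fun i => X i ⁻¹' I with hA_def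
  have hAmeas : ∀ i, MeasurableSet (A i) := fun i => (hmeas i) hI
  have hPA : ∀ i, P (A i) = P (A 0) := fun i => (hident i).measure_mem_eq hI
  set c : ℝ := (P (A 0)).toReal with hc_def
  have hεc : 1 - ε ≤ c := by
    refine (ENNReal.ofReal_le_iff_le_toReal (measure_ne_top P _)).mp ?_
    exact hconf
  have hc_pos : 0 < c := lt_of_lt_of_le (by linarith) hεc
  have hc_le1 : c ≤ 1 := by
    simp only [hc_def]
    exact ENNReal.toReal_le_of_le_ofReal one_pos.le (by simpa using prob_le_one)
  -- integrability helper
  have hint_helper : ∀ (g : ℝ → ℝ), Measurable g → ∀ (C : ℝ), (∀ x, |g x| ≤ C) →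
      ∀ i, Integrable (fun ω => g (X i ω)) P := by
    intro g hg C hC i
    refine Integrable.mono' (integrable_const C) ((hg.comp (hmeas i)).aestronglyMeasurable)
      (Filter.Eventually.of_forall fun ω => ?_)
    simpa using hC (X i ω)
  -- the basic indicator functions
  set ind1 : ℝ → ℝ := I.indicator (fun _ => 1) with hind1_def
  set indid : ℝ → ℝ := I.indicator id with hindid_def
  have hind1_meas : Measurable ind1 := measurable_const.indicator hI
  have hindid_meas : Measurable indid := measurable_id.indicator hI
  have hind1_bdd : ∀ x, |ind1 x| ≤ 1 := by
    intro x
    simp only [hind1_def]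
    by_cases hx : x ∈ I <;> simp [Set.indicator_of_mem, Set.indicator_of_notMem, hx]
  have hindid_bdd : ∀ x, |indid x| ≤ |a| + |b| := by
    intro x
    simp only [hindid_def]
    by_cases hx : x ∈ I
    · rw [Set.indicator_of_mem hx]
      obtain ⟨h1, h2⟩ := hx
      rw [abs_le]
      constructor
      · simp only [id_eq]; nlinarith [abs_nonneg a, abs_nonneg b, neg_abs_le a, le_abs_self a]
      · simp only [id_eq]; nlinarith [abs_nonneg a, abs_nonneg b, le_abs_self b]
    · rw [Set.indicator_of_notMem hx]
      simp [abs_nonneg]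
      positivity
  -- integral of ind1 ∘ X i = c
  have hind1_comp : ∀ i, (fun ω => ind1 (X i ω)) = (A i).indicator (fun _ => (1:ℝ)) := by
    intro i
    funext ω
    by_cases hω : X i ω ∈ I
    · have hω' : ω ∈ A i := hω
      rw [hind1_def, Set.indicator_of_mem hω, Set.indicator_of_mem hω']
    · have hω' : ω ∉ A i := hω
      rw [hind1_def, Set.indicator_of_notMem hω, Set.indicator_of_notMem hω']
  have hint_ind1 : ∀ i, ∫ ω, ind1 (X i ω) ∂P = c := by
    intro i
    rw [hind1_comp i, integral_indicator_const (1:ℝ) (hAmeas i), measureReal_def, hPA i]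
    simp [hc_def]
  -- the conditional mean
  set m₁ : ℝ := (∫ ω, indid (X 0 ω) ∂P) / c with hm₁_def
  have hint_indid : ∫ ω, indid (X 0 ω) ∂P = c * m₁ := by
    rw [hm₁_def]
    field_simp
  have hindid_int : ∀ i, Integrable (fun ω => indid (X i ω)) P :=
    hint_helper indid hindid_meas _ hindid_bdd
  have hind1_int : ∀ i, Integrable (fun ω => ind1 (X i ω)) P :=
    hint_helper ind1 hind1_meas _ hind1_bdd
  have hm₁_mem : a ≤ m₁ ∧ m₁ ≤ b := by
    have hlow : ∀ x, a * ind1 x ≤ indid x := by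
      intro x
      by_cases hx : x ∈ I
      · rw [hind1_def, hindid_def, Set.indicator_of_mem hx, Set.indicator_of_mem hx]
        simpa using hx.1
      · rw [hind1_def, hindid_def, Set.indicator_of_notMem hx, Set.indicator_of_notMem hx]
        simp
    have hhigh : ∀ x, indid x ≤ b * ind1 x := by
      intro x
      by_cases hx : x ∈ I
      · rw [hind1_def, hindid_def, Set.indicator_of_mem hx, Set.indicator_of_mem hx]
        simpa using hx.2
      · rw [hind1_def, hindid_def, Set.indicator_of_notMem hx, Set.indicator_of_notMem hx]
        simp
    have h1 : a * c ≤ c * m₁ := by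
      have := integral_mono ((hind1_int 0).const_mul a) (hindid_int 0)
        (fun ω => hlow (X 0 ω))
      rwa [integral_const_mul, hint_ind1 0, hint_indid] at this
    have h2 : c * m₁ ≤ b * c := by
      have := integral_mono (hindid_int 0) ((hind1_int 0).const_mul b)
        (fun ω => hhigh (X 0 ω))
      rwa [integral_const_mul, hint_ind1 0, hint_indid] at this
    constructor
    · nlinarith
    · nlinarith
  have hm₁a := hm₁_mem.1
  have hm₁b := hm₁_mem.2
  have hm₁_pos : 0 < m₁ := lt_of_lt_of_le ha_pos hm₁a
  -- the exponential indicator function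
  set G : ℝ → ℝ → ℝ := fun θ => I.indicator (fun x => Real.exp (θ * (x - m₁))) with hG_def
  have hG_meas : ∀ θ, Measurable (G θ) := by
    intro θ
    exact ((measurable_const.mul (measurable_id.sub_const m₁)).exp).indicator hI
  have hG_bdd : ∀ θ x, |G θ x| ≤ Real.exp (|θ| * σ₁) := by
    intro θ x
    simp only [hG_def]
    by_cases hx : x ∈ I
    · rw [Set.indicator_of_mem hx, abs_of_pos (Real.exp_pos _)]
      refine Real.exp_le_exp.mpr ?_
      obtain ⟨h1, h2⟩ := hx
      calc θ * (x - m₁) ≤ |θ * (x - m₁)| := le_abs_self _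
        _ = |θ| * |x - m₁| := abs_mul _ _
        _ ≤ |θ| * σ₁ := by
            refine mul_le_mul_of_nonneg_left ?_ (abs_nonneg θ)
            rw [abs_le]
            constructor <;> [linarith [hba, hm₁b]; linarith [hba, hm₁a]]
    · rw [Set.indicator_of_notMem hx]
      simp [Real.exp_pos, (Real.exp_pos _).le]
  have hG_nonneg : ∀ θ x, 0 ≤ G θ x := by
    intro θ x
    exact Set.indicator_nonneg (fun _ _ => (Real.exp_pos _).le) x
  have hG_int : ∀ θ i, Integrable (fun ω => G θ (X i ω)) P := by
    intro θ i
    exact hint_helper (G θ) (hG_meas θ) _ (hG_bdd θ) i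
  -- Hoeffding bound for each variable
  have hHoeffding : ∀ θ : ℝ, ∫ ω, G θ (X 0 ω) ∂P ≤ c * Real.exp (θ ^ 2 * σ₁ ^ 2 / 8) := by
    intro θ
    set α : ℝ := Real.exp (θ * (a - m₁)) / (b - a) with hα_def
    set β : ℝ := Real.exp (θ * (b - m₁)) / (b - a) with hβ_def
    have hba_pos : 0 < b - a := by linarith
    -- pointwise chord bound
    have hchord : ∀ x, G θ x ≤ α * (b * ind1 x - indid x) + β * (indid x - a * ind1 x) := by
      intro x
      by_cases hx : x ∈ I
      · have h1 := hx.1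
        have h2 := hx.2
        rw [hG_def]
        simp only
        rw [Set.indicator_of_mem hx]
        rw [hind1_def, hindid_def, Set.indicator_of_mem hx, Set.indicator_of_mem hx]
        simp only [id_eq]
        have hw1 : (0:ℝ) ≤ (b - x) / (b - a) := div_nonneg (by linarith) (by linarith)
        have hw2 : (0:ℝ) ≤ (x - a) / (b - a) := div_nonneg (by linarith) (by linarith)
        have hw12 : (b - x) / (b - a) + (x - a) / (b - a) = 1 := by
          field_simp
          ring
        have hconv := convexOn_exp.2 (Set.mem_univ (θ * (a - m₁))) (Set.mem_univ (θ * (b - m₁)))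
          hw1 hw2 hw12
        simp only [smul_eq_mul] at hconv
        have heq : (b - x) / (b - a) * (θ * (a - m₁)) + (x - a) / (b - a) * (θ * (b - m₁))
            = θ * (x - m₁) := by
          field_simp
          ring
        rw [heq] at hconv
        calc Real.exp (θ * (x - m₁))
            ≤ (b - x) / (b - a) * Real.exp (θ * (a - m₁))
              + (x - a) / (b - a) * Real.exp (θ * (b - m₁)) := hconv
          _ = α * (b * 1 - x) + β * (x - a * 1) := by
              rw [hα_def, hβ_def]; field_simp
      · rw [hG_def]
        simp only
        rw [Set.indicator_of_notMem hx, hind1_def, hindid_def,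
          Set.indicator_of_notMem hx, Set.indicator_of_notMem hx]
        simp
    -- integrate the chord bound
    have hi1 : Integrable (fun ω => b * ind1 (X 0 ω) - indid (X 0 ω)) P :=
      ((hind1_int 0).const_mul b).sub (hindid_int 0)
    have hi2 : Integrable (fun ω => indid (X 0 ω) - a * ind1 (X 0 ω)) P :=
      (hindid_int 0).sub ((hind1_int 0).const_mul a)
    have hInt_rhs : Integrable (fun ω => α * (b * ind1 (X 0 ω) - indid (X 0 ω))
        + β * (indid (X 0 ω) - a * ind1 (X 0 ω))) P :=
      (hi1.const_mul α).add (hi2.const_mul β)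
    have v1 : ∫ ω, (b * ind1 (X 0 ω) - indid (X 0 ω)) ∂P = b * c - c * m₁ := by
      rw [integral_sub ((hind1_int 0).const_mul b) (hindid_int 0), integral_const_mul,
        hint_ind1 0, hint_indid]
    have v2 : ∫ ω, (indid (X 0 ω) - a * ind1 (X 0 ω)) ∂P = c * m₁ - a * c := by
      rw [integral_sub (hindid_int 0) ((hind1_int 0).const_mul a), integral_const_mul,
        hint_ind1 0, hint_indid]
    have hstep : ∫ ω, G θ (X 0 ω) ∂P ≤ α * (b * c - c * m₁) + β * (c * m₁ - a * c) := by
      have hmono := integral_mono (hG_int θ 0) hInt_rhs (fun ω => hchord (X 0 ω))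
      rwa [integral_add (hi1.const_mul α) (hi2.const_mul β),
        integral_const_mul, integral_const_mul, v1, v2] at hmono
    set p : ℝ := (m₁ - a) / (b - a) with hp_def
    have hp0 : 0 ≤ p := div_nonneg (by linarith) (by linarith)
    have hp1 : p ≤ 1 := by rw [hp_def, div_le_one (by linarith)]; linarith
    have hq : 1 - p = (b - m₁) / (b - a) := by rw [hp_def]; field_simp; ring
    have hbern := bern_mgf_bound p hp0 hp1 (θ * (b - a))
    have e1 : -p * (θ * (b - a)) = θ * (a - m₁) := by
      rw [hp_def]; field_simp; ring
    have e2 : (1 - p) * (θ * (b - a)) = θ * (b - m₁) := by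
      rw [hq]; field_simp
    rw [e1, e2] at hbern
    have hmain : α * (b * c - c * m₁) + β * (c * m₁ - a * c)
        = c * ((1 - p) * Real.exp (θ * (a - m₁)) + p * Real.exp (θ * (b - m₁))) := by
      rw [hα_def, hβ_def, hq, hp_def]
      have hba' : b - a ≠ 0 := ne_of_gt hba_pos
      generalize Real.exp (θ * (a - m₁)) = E₁
      generalize Real.exp (θ * (b - m₁)) = E₂
      field_simp
    have hfin : (θ * (b - a)) ^ 2 / 8 = θ ^ 2 * σ₁ ^ 2 / 8 := by rw [hba]; ring
    calc ∫ ω, G θ (X 0 ω) ∂P ≤ α * (b * c - c * m₁) + β * (c * m₁ - a * c) := hstep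
      _ = c * ((1 - p) * Real.exp (θ * (a - m₁)) + p * Real.exp (θ * (b - m₁))) := hmain
      _ ≤ c * Real.exp ((θ * (b - a)) ^ 2 / 8) := mul_le_mul_of_nonneg_left hbern hc_pos.le
      _ = c * Real.exp (θ ^ 2 * σ₁ ^ 2 / 8) := by rw [hfin]
  -- transfer from index 0 to index i
  have hG_eq : ∀ (θ : ℝ) (i : ℕ), ∫ ω, G θ (X i ω) ∂P = ∫ ω, G θ (X 0 ω) ∂P := by
    intro θ i
    exact ((hident i).comp (hG_meas θ)).integral_eq
  have hG_int_nonneg : ∀ (θ : ℝ) (i : ℕ), 0 ≤ ∫ ω, G θ (X i ω) ∂P := fun θ i =>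
    integral_nonneg (fun ω => hG_nonneg θ (X i ω))
  -- product bound
  have hprodkey : ∀ θ : ℝ, Integrable (fun ω => ∏ i ∈ Finset.range j, G θ (X i ω)) P ∧
      ∫ ω, ∏ i ∈ Finset.range j, G θ (X i ω) ∂P
        = ∏ i ∈ Finset.range j, ∫ ω, G θ (X i ω) ∂P := by
    intro θ
    have hYindep : iIndepFun (fun i => fun ω => G θ (X i ω)) P :=
      hindep.comp (fun _ => G θ) (fun _ => hG_meas θ)
    exact iid_integral_prod hYindep (fun i => (hG_meas θ).comp (hmeas i)) (hG_int θ) _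
  have hprod_bound : ∀ θ : ℝ, ∫ ω, ∏ i ∈ Finset.range j, G θ (X i ω) ∂P
      ≤ c ^ j * Real.exp ((j : ℝ) * (θ ^ 2 * σ₁ ^ 2 / 8)) := by
    intro θ
    rw [(hprodkey θ).2,
      Finset.prod_congr rfl (fun i (_ : i ∈ Finset.range j) => hG_eq θ i),
      Finset.prod_const, Finset.card_range]
    calc (∫ ω, G θ (X 0 ω) ∂P) ^ j ≤ (c * Real.exp (θ ^ 2 * σ₁ ^ 2 / 8)) ^ j :=
        pow_le_pow_left₀ (hG_int_nonneg θ 0) (hHoeffding θ) j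
      _ = c ^ j * Real.exp ((j : ℝ) * (θ ^ 2 * σ₁ ^ 2 / 8)) := by
        rw [mul_pow, ← Real.exp_nat_mul]
  -- the sum and the big intersection
  set f : Ω → ℝ := fun ω => ∑ i ∈ Finset.range j, X i ω with hf_def
  have hf_meas : Measurable f := Finset.measurable_sum _ (fun i _ => hmeas i)
  set m : ℝ := (j : ℝ) * m₁ with hm_def
  have hm_pos : 0 < m := mul_pos hjpos hm₁_pos
  set Abig : Set Ω := ⋂ i ∈ Finset.range j, A i with hAbig_def
  have hAbig_meas : MeasurableSet Abig :=
    MeasurableSet.biInter (Finset.range j).countable_toSet (fun i _ => hAmeas i)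
  have hPAbig : (P Abig).toReal = c ^ j := by
    have hprodm := hindep.meas_biInter (S := Finset.range j) (s := A)
      (fun i _ => ⟨I, hI, rfl⟩)
    rw [hAbig_def, hprodm, Finset.prod_congr rfl (fun i (_ : i ∈ Finset.range j) => hPA i),
      Finset.prod_const, Finset.card_range, ENNReal.toReal_pow]
  -- Markov / Chernoff step
  have hmarkov : ∀ θ s : ℝ, (P (Abig ∩ {ω | s ≤ θ * (f ω - m)})).toReal
      ≤ c ^ j * Real.exp ((j : ℝ) * (θ ^ 2 * σ₁ ^ 2 / 8) - s) := by
    intro θ s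
    set V : Set Ω := {ω | s ≤ θ * (f ω - m)} with hV_def
    have hV_meas : MeasurableSet V :=
      measurableSet_le measurable_const ((hf_meas.sub_const m).const_mul θ)
    have hpt : ∀ ω, (Abig ∩ V).indicator (fun _ => Real.exp s) ω
        ≤ ∏ i ∈ Finset.range j, G θ (X i ω) := by
      intro ω
      by_cases hω : ω ∈ Abig ∩ V
      · rw [Set.indicator_of_mem hω]
        have hmem : ∀ i ∈ Finset.range j, X i ω ∈ I := by
          intro i hi
          have h1 : ω ∈ A i := by
            have := hω.1
            rw [hAbig_def] at this
            exact Set.mem_iInter₂.mp this i hi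
          exact h1
        have hprod_eq : ∏ i ∈ Finset.range j, G θ (X i ω) = Real.exp (θ * (f ω - m)) := by
          have h1 : ∀ i ∈ Finset.range j, G θ (X i ω) = Real.exp (θ * (X i ω - m₁)) := by
            intro i hi
            rw [hG_def]
            exact Set.indicator_of_mem (hmem i hi) _
          rw [Finset.prod_congr rfl h1, ← Real.exp_sum]
          congr 1
          rw [Finset.sum_congr rfl (fun i (_ : i ∈ Finset.range j) => mul_sub θ (X i ω) m₁),
            Finset.sum_sub_distrib, ← Finset.mul_sum, Finset.sum_const, Finset.card_range,
            nsmul_eq_mul, hf_def, hm_def]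
          ring
        rw [hprod_eq]
        exact Real.exp_le_exp.mpr hω.2
      · rw [Set.indicator_of_notMem hω]
        exact Finset.prod_nonneg fun i _ => hG_nonneg θ (X i ω)
    have hint_lhs : Integrable ((Abig ∩ V).indicator (fun _ => Real.exp s)) P :=
      (integrable_const _).indicator (hAbig_meas.inter hV_meas)
    have hmono := integral_mono hint_lhs (hprodkey θ).1 hpt
    rw [integral_indicator_const _ (hAbig_meas.inter hV_meas), measureReal_def, smul_eq_mul] at hmono
    have h2 := le_trans hmono (hprod_bound θ)
    have hexp_pos := Real.exp_pos s
    calc (P (Abig ∩ V)).toReal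
        = (P (Abig ∩ V)).toReal * Real.exp s / Real.exp s := by field_simp
      _ ≤ (c ^ j * Real.exp ((j : ℝ) * (θ ^ 2 * σ₁ ^ 2 / 8))) / Real.exp s := by gcongr
      _ = c ^ j * Real.exp ((j : ℝ) * (θ ^ 2 * σ₁ ^ 2 / 8) - s) := by
          rw [Real.exp_sub]; ring
  -- choose the parameters
  set t : ℝ := n * Real.sqrt (j : ℝ) * σ₁ / 2 with ht_def
  have hsqrt_pos : 0 < Real.sqrt (j : ℝ) := Real.sqrt_pos.mpr hjpos
  have hsq : Real.sqrt (j : ℝ) ^ 2 = (j : ℝ) := Real.sq_sqrt hjpos.le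
  have ht_pos : 0 < t := by rw [ht_def]; positivity
  have ht2 : t ^ 2 = n ^ 2 * (j : ℝ) * σ₁ ^ 2 / 4 := by
    have h0 : t ^ 2 = n ^ 2 * Real.sqrt (j : ℝ) ^ 2 * σ₁ ^ 2 / 4 := by rw [ht_def]; ring
    rw [h0, hsq]
  set θ0 : ℝ := 4 * t / ((j : ℝ) * σ₁ ^ 2) with hθ0_def
  have hθ0_pos : 0 < θ0 := by rw [hθ0_def]; positivity
  have hexp_eq : (j : ℝ) * (θ0 ^ 2 * σ₁ ^ 2 / 8) - θ0 * t = -n ^ 2 / 2 := by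
    have hj0 : (j : ℝ) ≠ 0 := hjpos.ne'
    have hσ0 : σ₁ ≠ 0 := hσ₁.ne'
    have h1 : (j : ℝ) * (θ0 ^ 2 * σ₁ ^ 2 / 8) - θ0 * t = -2 * t ^ 2 / ((j : ℝ) * σ₁ ^ 2) := by
      rw [hθ0_def]
      field_simp
      ring
    rw [h1, ht2]
    field_simp
    ring
  -- the good event
  set E : Set Ω := {ω | f ω ∈ Set.Icc (m - t) (m + t)} with hE_def
  have hE_meas : MeasurableSet E := hf_meas measurableSet_Icc
  set U : Set Ω := {ω | θ0 * t ≤ θ0 * (f ω - m)} with hU_def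
  set L : Set Ω := {ω | θ0 * t ≤ -θ0 * (f ω - m)} with hL_def
  have hsub : Abig ⊆ E ∪ ((Abig ∩ U) ∪ (Abig ∩ L)) := by
    intro ω hω
    by_cases h1 : f ω < m - t
    · refine Or.inr (Or.inr ⟨hω, ?_⟩)
      rw [hL_def]
      have h3 : t ≤ -(f ω - m) := by linarith
      have h4 := mul_le_mul_of_nonneg_left h3 hθ0_pos.le
      have : θ0 * t ≤ -θ0 * (f ω - m) := by nlinarith
      exact Set.mem_setOf.mpr this
    · by_cases h2 : m + t < f ω
      · refine Or.inr (Or.inl ⟨hω, ?_⟩)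
        rw [hU_def]
        have : t ≤ f ω - m := by linarith
        exact Set.mem_setOf.mpr (mul_le_mul_of_nonneg_left this hθ0_pos.le)
      · refine Or.inl ?_
        rw [hE_def]
        exact Set.mem_setOf.mpr (Set.mem_Icc.mpr ⟨by linarith, by linarith⟩)
  have hmeasU := hmarkov θ0 (θ0 * t)
  have hmeasL := hmarkov (-θ0) (θ0 * t)
  rw [hexp_eq] at hmeasU
  rw [neg_pow, show ((-1:ℝ))^2 = 1 by norm_num, one_mul] at hmeasL
  rw [hexp_eq] at hmeasL
  have hPE : c ^ j * (1 - 2 * Real.exp (-n ^ 2 / 2)) ≤ (P E).toReal := by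
    have hchain : P Abig ≤ P E + (P (Abig ∩ U) + P (Abig ∩ L)) := by
      refine le_trans (measure_mono hsub) ?_
      refine le_trans (measure_union_le _ _) ?_
      gcongr
      exact measure_union_le _ _
    have hfin : P E + (P (Abig ∩ U) + P (Abig ∩ L)) ≠ ⊤ :=
      ENNReal.add_ne_top.mpr ⟨measure_ne_top P _,
        ENNReal.add_ne_top.mpr ⟨measure_ne_top P _, measure_ne_top P _⟩⟩
    have htR := ENNReal.toReal_mono hfin hchain
    rw [ENNReal.toReal_add (measure_ne_top P _)
        (ENNReal.add_ne_top.mpr ⟨measure_ne_top P _, measure_ne_top P _⟩),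
      ENNReal.toReal_add (measure_ne_top P _) (measure_ne_top P _), hPAbig] at htR
    have hU' : (P (Abig ∩ U)).toReal ≤ c ^ j * Real.exp (-n ^ 2 / 2) := hmeasU
    have hL' : (P (Abig ∩ L)).toReal ≤ c ^ j * Real.exp (-n ^ 2 / 2) := hmeasL
    linarith
  -- the probability condition for the infimum
  have hprob : ENNReal.ofReal (1 - (1 - (1 - ε) ^ j * (1 - 2 * Real.exp (-n ^ 2 / 2))))
      ≤ P {ω | f ω ∈ Set.Icc (m - 2 * t / 2) (m + 2 * t / 2)} := by
    have hset : {ω | f ω ∈ Set.Icc (m - 2 * t / 2) (m + 2 * t / 2)} = E := by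
      rw [hE_def]
      norm_num
    rw [hset, sub_sub_cancel]
    rcases le_or_gt (1 - 2 * Real.exp (-n ^ 2 / 2)) 0 with hneg | hposs
    · rw [ENNReal.ofReal_eq_zero.mpr
        (mul_nonpos_of_nonneg_of_nonpos (pow_nonneg (by linarith) j) hneg)]
      exact zero_le
    · refine ENNReal.ofReal_le_of_le_toReal ?_
      calc (1 - ε) ^ j * (1 - 2 * Real.exp (-n ^ 2 / 2))
          ≤ c ^ j * (1 - 2 * Real.exp (-n ^ 2 / 2)) :=
            mul_le_mul_of_nonneg_right (pow_le_pow_left₀ (by linarith) hεc j) hposs.le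
        _ ≤ (P E).toReal := hPE
  -- conclude via the infimum
  calc inaccuracy P f j (1 - (1 - ε) ^ j * (1 - 2 * Real.exp (-n ^ 2 / 2)))
      ≤ ENNReal.ofReal ((j : ℝ) * (2 * t) / m) := by
        rw [inaccuracy]
        refine iInf_le_of_le m ?_
        refine iInf_le_of_le (2 * t) ?_
        refine iInf_le_of_le hm_pos ?_
        refine iInf_le_of_le (by positivity) ?_
        exact iInf_le_of_le hprob le_rfl
    _ ≤ ENNReal.ofReal (2 * n * Real.sqrt (j : ℝ) * (σ₁ / μ₁)) := by
        apply ENNReal.ofReal_le_ofReal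
        have hval : (j : ℝ) * (2 * t) / m = n * Real.sqrt (j : ℝ) * σ₁ / m₁ := by
          rw [ht_def, hm_def]
          field_simp
        rw [hval]
        have h2m : μ₁ ≤ 2 * m₁ := by
          have := hm₁a
          rw [ha_def] at this
          linarith
        rw [div_le_iff₀ hm₁_pos]
        have hrw : 2 * n * Real.sqrt (j : ℝ) * (σ₁ / μ₁) * m₁
            = n * Real.sqrt (j : ℝ) * σ₁ * (2 * m₁ / μ₁) := by
          field_simp
        rw [hrw]
        have hge1 : (1 : ℝ) ≤ 2 * m₁ / μ₁ := by
          rw [le_div_iff₀ hμ₁]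
          linarith
        exact le_mul_of_one_le_right (by positivity) hge1
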